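/- For all real a > 0, p > 0 and q > 0, ∫_0^∞ ∫_0^∞ e^{−px − qy} · cos(2√(axy))/√(xy) dx dy = π/√(a + pq). -/
import Mathlib

open MeasureTheory Set

lemma integrable_cos_gauss (p c : ℝ) (hp : 0 < p) :
    Integrable (fun x : ℝ => Real.cos (c * x) * Real.exp (-p * x ^ 2)) := by
  refine (integrable_exp_neg_mul_sq hp).mono' ?_ ?_
  · exact (Real.continuous_cos.comp (continuous_const.mul continuous_id)).mul
      (Real.continuous_exp.comp (continuous_const.mul (continuous_pow 2))) |>.aestronglyMeasurable
  · filter_upwards with x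
    rw [norm_mul, Real.norm_eq_abs, Real.norm_eq_abs, Real.abs_exp]
    calc |Real.cos (c * x)| * Real.exp (-p * x ^ 2)
        ≤ 1 * Real.exp (-p * x ^ 2) := by
          gcongr; exact Real.abs_cos_le_one _
      _ = Real.exp (-p * x ^ 2) := one_mul _

lemma gauss_cos (p c : ℝ) (hp : 0 < p) :
    ∫ x : ℝ, Real.cos (c * x) * Real.exp (-p * x ^ 2)
      = Real.sqrt (Real.pi / p) * Real.exp (-c ^ 2 / (4 * p)) := by
  have hb : (0 : ℝ) < (p : ℂ).re := by simpa using hp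
  have h := fourierIntegral_gaussian (b := (p : ℂ)) hb (c : ℂ)
  have hint : Integrable (fun x : ℝ =>
      Complex.exp (Complex.I * c * x) * Complex.exp (-(p : ℂ) * x ^ 2)) := by
    have h2 := integrable_cexp_quadratic (b := (p : ℂ)) hb (Complex.I * c) 0
    have : (fun x : ℝ => Complex.exp (Complex.I * c * x) * Complex.exp (-(p : ℂ) * x ^ 2))
        = fun x : ℝ => Complex.exp (-(p : ℂ) * x ^ 2 + (Complex.I * (c : ℂ)) * x + 0) := by
      funext x; rw [← Complex.exp_add]; ring_nf
    rw [this]; exact h2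
  have h1 : ∀ x : ℝ, (Complex.exp (Complex.I * c * x) * Complex.exp (-(p : ℂ) * x ^ 2)).re
      = Real.cos (c * x) * Real.exp (-p * x ^ 2) := by
    intro x
    have e1 : Complex.I * (c : ℂ) * (x : ℂ) = ((c * x : ℝ) : ℂ) * Complex.I := by
      push_cast; ring
    have e2 : -(p : ℂ) * (x : ℂ) ^ 2 = ((-p * x ^ 2 : ℝ) : ℂ) := by push_cast; ring
    rw [e1, e2, ← Complex.ofReal_exp, Complex.mul_re, Complex.ofReal_re, Complex.ofReal_im,
      mul_zero, sub_zero, Complex.exp_ofReal_mul_I_re]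
  have hre0 := integral_re hint
  simp only [RCLike.re_to_complex] at hre0
  have hre : ∫ x : ℝ, Real.cos (c * x) * Real.exp (-p * x ^ 2)
      = (∫ x : ℝ, Complex.exp (Complex.I * c * x) * Complex.exp (-(p : ℂ) * x ^ 2)).re := by
    rw [← hre0]
    congr 1; funext x; exact (h1 x).symm
  rw [hre, h]
  have e3 : ((Real.pi : ℂ) / (p : ℂ)) ^ (1 / 2 : ℂ) = ((Real.sqrt (Real.pi / p) : ℝ) : ℂ) := by
    rw [show ((Real.pi : ℂ) / (p : ℂ)) = ((Real.pi / p : ℝ) : ℂ) by push_cast; ring,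
      show (1 / 2 : ℂ) = ((1 / 2 : ℝ) : ℂ) by norm_num,
      ← Complex.ofReal_cpow (by positivity), ← Real.sqrt_eq_rpow]
  have e4 : -(c : ℂ) ^ 2 / (4 * (p : ℂ)) = ((-c ^ 2 / (4 * p) : ℝ) : ℂ) := by push_cast; ring
  rw [e3, e4, ← Complex.ofReal_exp, ← Complex.ofReal_mul, Complex.ofReal_re]

lemma gauss_cos_Ioi (p c : ℝ) (hp : 0 < p) :
    ∫ x in Ioi (0 : ℝ), Real.cos (c * x) * Real.exp (-p * x ^ 2)
      = Real.sqrt (Real.pi / p) * Real.exp (-c ^ 2 / (4 * p)) / 2 := by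
  set f : ℝ → ℝ := fun x => Real.cos (c * x) * Real.exp (-p * x ^ 2) with hf
  have hi := integrable_cos_gauss p c hp
  have hsplit := intervalIntegral.integral_Iic_add_Ioi (b := (0 : ℝ)) hi.integrableOn hi.integrableOn
  have hsym : ∫ x in Iic (0 : ℝ), f x = ∫ x in Ioi (0 : ℝ), f x := by
    have h0 := integral_comp_neg_Ioi (0 : ℝ) f
    rw [neg_zero] at h0
    rw [← h0]
    refine setIntegral_congr_fun measurableSet_Ioi fun x _ => ?_
    simp [hf, mul_neg, Real.cos_neg]
  have : (2 : ℝ) * ∫ x in Ioi (0 : ℝ), f x = ∫ x : ℝ, f x := by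
    rw [← hsplit, hsym]; ring
  have hgc := gauss_cos p c hp
  rw [← hf] at hgc  -- maybe no-op
  linarith [this, hgc]

lemma laplace_cos_sqrt (p c : ℝ) (hp : 0 < p) :
    ∫ x in Ioi (0 : ℝ), Real.exp (-p * x) * (Real.cos (c * Real.sqrt x) / Real.sqrt x)
      = Real.sqrt (Real.pi / p) * Real.exp (-c ^ 2 / (4 * p)) := by
  have himg : (fun t : ℝ => t ^ 2) '' Ioi 0 = Ioi (0 : ℝ) := by
    ext x
    simp only [mem_image, mem_Ioi]
    constructor
    · rintro ⟨t, ht, rfl⟩; positivity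
    · intro hx; exact ⟨Real.sqrt x, Real.sqrt_pos.mpr hx, Real.sq_sqrt hx.le⟩
  have hderiv : ∀ t ∈ Ioi (0 : ℝ), HasDerivWithinAt (fun t : ℝ => t ^ 2) (2 * t) (Ioi 0) t := by
    intro t _
    simpa using (hasDerivAt_pow 2 t).hasDerivWithinAt
  have hinj : InjOn (fun t : ℝ => t ^ 2) (Ioi 0) := by
    intro x hx y hy hxy
    simp only [mem_Ioi] at hx hy
    have h2 : x ^ 2 = y ^ 2 := hxy
    nlinarith [sq_nonneg (x - y), sq_nonneg (x + y)]
  rw [← himg, integral_image_eq_integral_abs_deriv_smul measurableSet_Ioi hderiv hinj]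
  have : ∀ t ∈ Ioi (0 : ℝ),
      |2 * t| • (Real.exp (-p * t ^ 2) * (Real.cos (c * Real.sqrt (t ^ 2)) / Real.sqrt (t ^ 2)))
        = 2 * (Real.cos (c * t) * Real.exp (-p * t ^ 2)) := by
    intro t ht
    simp only [mem_Ioi] at ht
    rw [Real.sqrt_sq ht.le, abs_of_pos (by linarith), smul_eq_mul]
    field_simp
  rw [setIntegral_congr_fun measurableSet_Ioi this, integral_const_mul, gauss_cos_Ioi p c hp]
  ring

/-- A two-dimensional Laplace transform (Prudnikov, Vol. 4, 3.1.3.61). -/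
theorem double_laplace_cos (a p q : ℝ) (ha : 0 < a) (hp : 0 < p) (hq : 0 < q) :
    ∫ y : ℝ in Ioi 0, ∫ x : ℝ in Ioi 0,
        Real.exp (-p * x - q * y) * (Real.cos (2 * Real.sqrt (a * x * y)) / Real.sqrt (x * y))
      = Real.pi / Real.sqrt (a + p * q) := by
  have hr : 0 < q + a / p := by positivity
  have hinner : ∀ y ∈ Ioi (0 : ℝ),
      (∫ x in Ioi (0 : ℝ),
          Real.exp (-p * x - q * y) * (Real.cos (2 * Real.sqrt (a * x * y)) / Real.sqrt (x * y)))
      = Real.sqrt (Real.pi / p) *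
          (Real.exp (-(q + a / p) * y) * (Real.cos (0 * Real.sqrt y) / Real.sqrt y)) := by
    intro y hy
    simp only [mem_Ioi] at hy
    set c := 2 * Real.sqrt (a * y) with hc
    have hstep : ∀ x ∈ Ioi (0 : ℝ),
        Real.exp (-p * x - q * y) * (Real.cos (2 * Real.sqrt (a * x * y)) / Real.sqrt (x * y))
        = (Real.exp (-q * y) / Real.sqrt y) *
            (Real.exp (-p * x) * (Real.cos (c * Real.sqrt x) / Real.sqrt x)) := by
      intro x hx
      simp only [mem_Ioi] at hx
      have e1 : Real.sqrt (a * x * y) = Real.sqrt (a * y) * Real.sqrt x := by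
        rw [show a * x * y = (a * y) * x by ring, Real.sqrt_mul (by positivity)]
      have e2 : Real.sqrt (x * y) = Real.sqrt x * Real.sqrt y := Real.sqrt_mul hx.le y
      have e3 : Real.exp (-p * x - q * y) = Real.exp (-q * y) * Real.exp (-p * x) := by
        rw [← Real.exp_add]; ring_nf
      have hsx : 0 < Real.sqrt x := Real.sqrt_pos.mpr hx
      have hsy : 0 < Real.sqrt y := Real.sqrt_pos.mpr hy
      have e4 : 2 * Real.sqrt (a * x * y) = c * Real.sqrt x := by
        rw [e1, hc]; ring
      rw [e3, e4, e2]
      field_simp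
    rw [setIntegral_congr_fun measurableSet_Ioi hstep, integral_const_mul,
      laplace_cos_sqrt p c hp]
    have hc2 : c ^ 2 = 4 * (a * y) := by
      rw [hc, mul_pow, Real.sq_sqrt (by positivity)]; ring
    rw [hc2, zero_mul, Real.cos_zero]
    rw [show -(4 * (a * y)) / (4 * p) = -(a / p) * y by field_simp]
    rw [show -(q + a / p) * y = (-q * y) + (-(a / p) * y) by ring, Real.exp_add]
    ring
  rw [setIntegral_congr_fun measurableSet_Ioi hinner, integral_const_mul,
    laplace_cos_sqrt (q + a / p) 0 hr]
  rw [show (0 : ℝ) ^ 2 = 0 by ring, neg_zero, zero_div, Real.exp_zero, mul_one]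
  rw [← Real.sqrt_mul (by positivity)]
  rw [show (Real.pi / p) * (Real.pi / (q + a / p)) = Real.pi ^ 2 / (a + p * q) by
    field_simp; ring]
  rw [Real.sqrt_div (by positivity), Real.sqrt_sq Real.pi_pos.le]
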